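/- Let Λ be a compact invariant set of a surface diffeomorphism f with a dominated splitting T_Λ M = E ⊕ F into line bundles: there is λ ∈ (0,1) with ‖Df|_E(x)‖ / ‖Df|_F(x)‖ < λ for all x ∈ Λ. Then Crit(f, Λ) = ∅: for every x ∈ Λ and unit v ∈ T_x M, it is not the case that g^n(v) ≥ 1 for all n ∈ ℤ. (Indeed, if v ∉ E then ‖Df^n v‖ / ‖Df^n|_E‖ grows like λ^{-n}, so g^n(v) = |det Df^n|/‖Df^n v‖² ≤ (‖Df^n|_E‖ ‖Df^n|_F‖ / ‖Df^n v‖²) · C → 0 as n → +∞; if v ∈ E a symmetric argument applies backward.) -/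

import Mathlib

noncomputable section

/-- The standard area form on `ℝ²`. -/
def om (u w : EuclideanSpace ℝ (Fin 2)) : ℝ := u 0 * w 1 - u 1 * w 0

lemma repr2 (u : EuclideanSpace ℝ (Fin 2)) :
    u = u 0 • EuclideanSpace.single 0 (1:ℝ) + u 1 • EuclideanSpace.single 1 (1:ℝ) := by
  ext i; fin_cases i <;> simp

lemma det2 (L : EuclideanSpace ℝ (Fin 2) →ₗ[ℝ] EuclideanSpace ℝ (Fin 2)) :
    LinearMap.det L = L (EuclideanSpace.single 0 1) 0 * L (EuclideanSpace.single 1 1) 1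
      - L (EuclideanSpace.single 0 1) 1 * L (EuclideanSpace.single 1 1) 0 := by
  rw [← LinearMap.det_toMatrix (EuclideanSpace.basisFun (Fin 2) ℝ).toBasis L,
    Matrix.det_fin_two]
  simp [LinearMap.toMatrix_apply, EuclideanSpace.basisFun_apply]; ring

lemma om_det (L : EuclideanSpace ℝ (Fin 2) →ₗ[ℝ] EuclideanSpace ℝ (Fin 2))
    (u w : EuclideanSpace ℝ (Fin 2)) :
    om (L u) (L w) = LinearMap.det L * om u w := by
  rw [det2 L]
  rw [show L u = u 0 • L (EuclideanSpace.single 0 1) + u 1 • L (EuclideanSpace.single 1 1) by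
      conv_lhs => rw [repr2 u]
      simp,
    show L w = w 0 • L (EuclideanSpace.single 0 1) + w 1 • L (EuclideanSpace.single 1 1) by
      conv_lhs => rw [repr2 w]
      simp]
  simp only [om, PiLp.add_apply, PiLp.smul_apply, smul_eq_mul]
  ring

lemma om_smul_smul (p q : ℝ) (u w : EuclideanSpace ℝ (Fin 2)) :
    om (p • u) (q • w) = (p * q) * om u w := by
  simp only [om, PiLp.smul_apply, smul_eq_mul]; ring

lemma om_abs_le (u w : EuclideanSpace ℝ (Fin 2)) : |om u w| ≤ ‖u‖ * ‖w‖ := by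
  have hu : ‖u‖ ^ 2 = u 0 ^ 2 + u 1 ^ 2 := by
    rw [EuclideanSpace.norm_eq, Real.sq_sqrt (by positivity)]
    simp [Fin.sum_univ_two, sq_abs]
  have hw : ‖w‖ ^ 2 = w 0 ^ 2 + w 1 ^ 2 := by
    rw [EuclideanSpace.norm_eq, Real.sq_sqrt (by positivity)]
    simp [Fin.sum_univ_two, sq_abs]
  have h : (om u w) ^ 2 ≤ (‖u‖ * ‖w‖) ^ 2 := by
    rw [mul_pow, hu, hw]
    simp only [om]
    nlinarith [sq_nonneg (u 0 * w 0 + u 1 * w 1)]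
  exact abs_le_of_sq_le_sq h (by positivity)

lemma om_ne_zero {u w : EuclideanSpace ℝ (Fin 2)}
    (h : LinearIndependent ℝ ![u, w]) : om u w ≠ 0 := by
  intro h0
  rw [LinearIndependent.pair_iff] at h
  simp only [om, sub_eq_zero] at h0
  have h1 := h (w 1) (-(u 1)) (by
    ext i; fin_cases i <;> simp <;> [linarith; ring])
  have h2 := h (w 0) (-(u 0)) (by
    ext i; fin_cases i <;> simp <;> [ring; nlinarith [h1.1, h1.2]])
  have h3 := h 1 0 (by
    ext i
    fin_cases i <;> simp <;> [linarith [h2.2]; linarith [h1.2]])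
  exact one_ne_zero h3.1

set_option maxHeartbeats 1000000

/-- A dominated splitting has no critical points: if a compact invariant set `Λ` of a
surface diffeomorphism carries a dominated splitting `TM|_Λ = E ⊕ F` into line fields
(spanned by unit vector fields `Es`, `Fs`, invariant under `Df`, with uniform domination
constant `lam < 1`), then no point of `Λ` admits a unit direction `v` with
`g^n(v) = |det D f^n| / ‖D f^n v‖² ≥ 1` for all `n ∈ ℤ`. -/
theorem stmt16
    (f finv : EuclideanSpace ℝ (Fin 2) → EuclideanSpace ℝ (Fin 2))
    (hf : ContDiff ℝ 1 f) (hfinv : ContDiff ℝ 1 finv)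
    (hinv : Function.LeftInverse finv f ∧ Function.RightInverse finv f)
    (Λ : Set (EuclideanSpace ℝ (Fin 2))) (hΛc : IsCompact Λ) (hΛi : f '' Λ = Λ)
    (Es Fs : EuclideanSpace ℝ (Fin 2) → EuclideanSpace ℝ (Fin 2))
    (hEunit : ∀ x ∈ Λ, ‖Es x‖ = 1) (hFunit : ∀ x ∈ Λ, ‖Fs x‖ = 1)
    (hindep : ∀ x ∈ Λ, LinearIndependent ℝ ![Es x, Fs x])
    (hEinv : ∀ x ∈ Λ, ∃ α : ℝ, fderiv ℝ f x (Es x) = α • Es (f x))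
    (hFinv : ∀ x ∈ Λ, ∃ β : ℝ, fderiv ℝ f x (Fs x) = β • Fs (f x))
    (lam : ℝ) (hlam0 : 0 < lam) (hlam1 : lam < 1)
    (hdom : ∀ x ∈ Λ, ‖fderiv ℝ f x (Es x)‖ < lam * ‖fderiv ℝ f x (Fs x)‖) :
    ∀ x ∈ Λ, ¬ ∃ v : EuclideanSpace ℝ (Fin 2), ‖v‖ = 1 ∧
      (∀ n : ℕ, 1 ≤ |LinearMap.det (fderiv ℝ (f^[n]) x).toLinearMap| /
        ‖fderiv ℝ (f^[n]) x v‖ ^ 2) ∧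
      (∀ n : ℕ, 1 ≤ |LinearMap.det (fderiv ℝ (finv^[n]) x).toLinearMap| /
        ‖fderiv ℝ (finv^[n]) x v‖ ^ 2) := by
  obtain ⟨hli, hri⟩ := hinv
  intro x hx
  rintro ⟨v, hv1, hgp, hgm⟩
  have hdf : Differentiable ℝ f := hf.differentiable one_ne_zero
  have hdg : Differentiable ℝ finv := hfinv.differentiable one_ne_zero
  -- Λ is forward and backward invariant
  have hfΛ : ∀ y ∈ Λ, f y ∈ Λ := fun y hy => hΛi ▸ Set.mem_image_of_mem f hy
  have hgΛ : ∀ y ∈ Λ, finv y ∈ Λ := by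
    intro y hy
    rw [← hΛi] at hy
    obtain ⟨z, hz, rfl⟩ := hy
    rw [hli z]; exact hz
  have hxn : ∀ n : ℕ, f^[n] x ∈ Λ := by
    intro n; induction n with
    | zero => simpa using hx
    | succ n ih => rw [Function.iterate_succ_apply']; exact hfΛ _ ih
  have hyn : ∀ n : ℕ, finv^[n] x ∈ Λ := by
    intro n; induction n with
    | zero => simpa using hx
    | succ n ih => rw [Function.iterate_succ_apply']; exact hgΛ _ ih
  -- chain rule for iterates
  have hDf : ∀ (n : ℕ), fderiv ℝ (f^[n+1]) x
      = (fderiv ℝ f (f^[n] x)).comp (fderiv ℝ (f^[n]) x) := by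
    intro n
    rw [Function.iterate_succ']
    exact fderiv_comp x (hdf _) ((hdf.iterate n) x)
  have hDg : ∀ (n : ℕ), fderiv ℝ (finv^[n+1]) x
      = (fderiv ℝ finv (finv^[n] x)).comp (fderiv ℝ (finv^[n]) x) := by
    intro n
    rw [Function.iterate_succ']
    exact fderiv_comp x (hdg _) ((hdg.iterate n) x)
  -- derivative of f is injective
  have hdinj : ∀ z : EuclideanSpace ℝ (Fin 2), ∀ u,
      fderiv ℝ finv (f z) (fderiv ℝ f z u) = u := by
    intro z u
    have hcomp : fderiv ℝ (finv ∘ f) z = (fderiv ℝ finv (f z)).comp (fderiv ℝ f z) :=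
      fderiv_comp z (hdg _) (hdf z)
    have hid : finv ∘ f = id := funext hli
    rw [hid, fderiv_id] at hcomp
    have := congrArg (fun L : EuclideanSpace ℝ (Fin 2) →L[ℝ] EuclideanSpace ℝ (Fin 2) => L u)
      hcomp
    simpa using this.symm
  -- the multipliers at each point of Λ
  have key : ∀ y ∈ Λ, ∃ α β : ℝ, fderiv ℝ f y (Es y) = α • Es (f y) ∧
      fderiv ℝ f y (Fs y) = β • Fs (f y) ∧ |α| ≤ lam * |β| ∧ α ≠ 0 ∧ β ≠ 0 := by
    intro y hy
    obtain ⟨α, hα⟩ := hEinv y hy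
    obtain ⟨β, hβ⟩ := hFinv y hy
    have hnE : ‖fderiv ℝ f y (Es y)‖ = |α| := by
      rw [hα, norm_smul, hEunit _ (hfΛ y hy), Real.norm_eq_abs, mul_one]
    have hnF : ‖fderiv ℝ f y (Fs y)‖ = |β| := by
      rw [hβ, norm_smul, hFunit _ (hfΛ y hy), Real.norm_eq_abs, mul_one]
    have hd := hdom y hy
    rw [hnE, hnF] at hd
    have hβ0 : β ≠ 0 := by
      intro h0
      rw [h0] at hd
      simp at hd
      exact absurd hd (not_lt.2 (abs_nonneg α))
    have hα0 : α ≠ 0 := by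
      intro h0
      have : fderiv ℝ f y (Es y) = 0 := by rw [hα, h0, zero_smul]
      have h1 := hdinj y (Es y)
      rw [this, map_zero] at h1
      have := hEunit y hy
      rw [← h1] at this
      simp at this
    exact ⟨α, β, hα, hβ, le_of_lt hd, hα0, hβ0⟩
  -- forward cocycle
  have fwd : ∀ n : ℕ, ∃ p q : ℝ,
      fderiv ℝ (f^[n]) x (Es x) = p • Es (f^[n] x) ∧
      fderiv ℝ (f^[n]) x (Fs x) = q • Fs (f^[n] x) ∧ |p| ≤ lam ^ n * |q| := by
    intro n; induction n with
    | zero => exact ⟨1, 1, by simp, by simp, by simp⟩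
    | succ n ih =>
      obtain ⟨p, q, hp, hq, hpq⟩ := ih
      obtain ⟨α, β, hα, hβ, hdm, hα0, hβ0⟩ := key (f^[n] x) (hxn n)
      refine ⟨α * p, β * q, ?_, ?_, ?_⟩
      · rw [hDf n]
        simp only [ContinuousLinearMap.coe_comp', Function.comp_apply, hp, map_smul, hα,
          Function.iterate_succ_apply', smul_smul, mul_comm]
      · rw [hDf n]
        simp only [ContinuousLinearMap.coe_comp', Function.comp_apply, hq, map_smul, hβ,
          Function.iterate_succ_apply', smul_smul, mul_comm]
      · rw [abs_mul, abs_mul, pow_succ]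
        calc |α| * |p| ≤ (lam * |β|) * (lam ^ n * |q|) := by
              apply mul_le_mul hdm hpq (abs_nonneg p)
              positivity
          _ = lam ^ n * lam * (|β| * |q|) := by ring
  -- backward cocycle
  have bwd : ∀ n : ℕ, ∃ p q : ℝ,
      fderiv ℝ (finv^[n]) x (Es x) = p • Es (finv^[n] x) ∧
      fderiv ℝ (finv^[n]) x (Fs x) = q • Fs (finv^[n] x) ∧ |q| ≤ lam ^ n * |p| := by
    intro n; induction n with
    | zero => exact ⟨1, 1, by simp, by simp, by simp⟩
    | succ n ih =>
      obtain ⟨p, q, hp, hq, hqp⟩ := ih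
      set y := finv^[n] x with hy
      have hyΛ : y ∈ Λ := hyn n
      have hzΛ : finv y ∈ Λ := hgΛ y hyΛ
      obtain ⟨α, β, hα, hβ, hdm, hα0, hβ0⟩ := key (finv y) hzΛ
      rw [hri y] at hα hβ
      -- fderiv finv y (Es y) = α⁻¹ • Es (finv y)
      have hEg : fderiv ℝ finv y (Es y) = α⁻¹ • Es (finv y) := by
        have h1 := hdinj (finv y) (Es (finv y))
        rw [hri y] at h1
        rw [hα, map_smul] at h1
        have : fderiv ℝ finv y (Es y) = α⁻¹ • (α • fderiv ℝ finv y (Es y)) := by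
          rw [smul_smul, inv_mul_cancel₀ hα0, one_smul]
        rw [this, h1]
      have hFg : fderiv ℝ finv y (Fs y) = β⁻¹ • Fs (finv y) := by
        have h1 := hdinj (finv y) (Fs (finv y))
        rw [hri y] at h1
        rw [hβ, map_smul] at h1
        have : fderiv ℝ finv y (Fs y) = β⁻¹ • (β • fderiv ℝ finv y (Fs y)) := by
          rw [smul_smul, inv_mul_cancel₀ hβ0, one_smul]
        rw [this, h1]
      refine ⟨α⁻¹ * p, β⁻¹ * q, ?_, ?_, ?_⟩
      · rw [hDg n]
        simp only [ContinuousLinearMap.coe_comp', Function.comp_apply, ← hy, hp, map_smul, hEg,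
          Function.iterate_succ_apply', smul_smul, mul_comm]
      · rw [hDg n]
        simp only [ContinuousLinearMap.coe_comp', Function.comp_apply, ← hy, hq, map_smul, hFg,
          Function.iterate_succ_apply', smul_smul, mul_comm]
      · have hαa : 0 < |α| := abs_pos.2 hα0
        have hβa : 0 < |β| := abs_pos.2 hβ0
        rw [abs_mul, abs_mul, abs_inv, abs_inv, pow_succ]
        rw [inv_mul_eq_div, div_le_iff₀ hβa]
        have h2 : |q| * |α| ≤ lam ^ n * lam * (|α|⁻¹ * |p|) * |β| * |α| := by
          have h3 : |q| * |α| ≤ (lam ^ n * |p|) * (lam * |β|) :=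
            mul_le_mul hqp hdm (abs_nonneg α) (by positivity)
          calc |q| * |α| ≤ (lam ^ n * |p|) * (lam * |β|) := h3
            _ = lam ^ n * lam * (|α|⁻¹ * |p|) * |β| * |α| := by
                field_simp
        exact le_of_mul_le_mul_right h2 hαa
  -- coordinates of v
  set δ : ℝ := om (Es x) (Fs x) with hδdef
  have hδ : δ ≠ 0 := om_ne_zero (hindep x hx)
  have hδpos : 0 < |δ| := abs_pos.2 hδ
  obtain ⟨a, b, hvab⟩ : ∃ a b : ℝ, v = a • Es x + b • Fs x := by
    refine ⟨om v (Fs x) / δ, om (Es x) v / δ, ?_⟩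
    have hδ' : Es x 0 * Fs x 1 - Es x 1 * Fs x 0 ≠ 0 := by simpa [hδdef, om] using hδ
    have hδ'' : Fs x 1 * Es x 0 - Fs x 0 * Es x 1 ≠ 0 := by intro h; apply hδ'; linarith
    ext i
    fin_cases i <;>
      (simp only [hδdef, om, PiLp.add_apply, PiLp.smul_apply, smul_eq_mul, Fin.zero_eta, Fin.mk_one]; field_simp; ring)
  by_cases hb : b = 0
  · -- v is in the E direction: use backward dynamics
    have hva : v = a • Es x := by rw [hvab, hb, zero_smul, add_zero]
    have ha1 : |a| = 1 := by
      have := hv1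
      rw [hva, norm_smul, hEunit x hx, Real.norm_eq_abs, mul_one] at this
      exact this
    obtain ⟨n, hn⟩ := exists_pow_lt_of_lt_one hδpos hlam1
    obtain ⟨p, q, hp, hq, hqp⟩ := bwd n
    set L := fderiv ℝ (finv^[n]) x with hL
    have hLv : L v = (a * p) • Es (finv^[n] x) := by
      rw [hva, map_smul, hp, smul_smul]
    have hnv : ‖L v‖ = |p| := by
      rw [hLv, norm_smul, hEunit _ (hyn n), Real.norm_eq_abs, mul_one, abs_mul, ha1, one_mul]
    have hg := hgm n
    have hp0 : p ≠ 0 := by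
      intro h0
      rw [← hL, hnv, h0, abs_zero] at hg
      norm_num at hg
    have hpp : (0:ℝ) < |p| := abs_pos.2 hp0
    have hdet : |LinearMap.det (L.toLinearMap)| * |δ| ≤ |p| * |q| := by
      have h1 := om_det L.toLinearMap (Es x) (Fs x)
      have h2 : om (L (Es x)) (L (Fs x)) = LinearMap.det (L.toLinearMap) * δ := h1
      rw [hp, hq, om_smul_smul] at h2
      have h3 : |LinearMap.det (L.toLinearMap)| * |δ|
          = |p| * |q| * |om (Es (finv^[n] x)) (Fs (finv^[n] x))| := by
        rw [← abs_mul, ← h2, abs_mul, abs_mul]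
      rw [h3]
      have h4 : |om (Es (finv^[n] x)) (Fs (finv^[n] x))| ≤ 1 := by
        have := om_abs_le (Es (finv^[n] x)) (Fs (finv^[n] x))
        rwa [hEunit _ (hyn n), hFunit _ (hyn n), one_mul] at this
      nlinarith [mul_nonneg (abs_nonneg p) (abs_nonneg q), abs_nonneg (om (Es (finv^[n] x)) (Fs (finv^[n] x)))]
    have hD : ‖L v‖ ^ 2 ≤ |LinearMap.det (L.toLinearMap)| := by
      have h5 : (0:ℝ) < ‖L v‖ ^ 2 := by rw [hnv]; positivity
      have := (le_div_iff₀ h5).mp hg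
      linarith
    rw [hnv] at hD
    nlinarith [mul_pos hpp hpp, hδpos, abs_nonneg q]
  · -- v has a component in the F direction: use forward dynamics
    have hba : (0:ℝ) < |b| := abs_pos.2 hb
    have hε1 : (0:ℝ) < |b| / (2 * (|a| + 1)) := by positivity
    have hε2 : (0:ℝ) < |δ| * b ^ 2 / 4 := by positivity
    obtain ⟨n, hn⟩ := exists_pow_lt_of_lt_one (lt_min hε1 hε2) hlam1
    have hn1 : lam ^ n < |b| / (2 * (|a| + 1)) := lt_of_lt_of_le hn (min_le_left _ _)
    have hn2 : lam ^ n < |δ| * b ^ 2 / 4 := lt_of_lt_of_le hn (min_le_right _ _)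
    obtain ⟨p, q, hp, hq, hpq⟩ := fwd n
    set L := fderiv ℝ (f^[n]) x with hL
    have hLv : L v = (a * p) • Es (f^[n] x) + (b * q) • Fs (f^[n] x) := by
      rw [hvab]
      simp only [map_add, map_smul, hp, hq, smul_smul]
    have hg := hgp n
    have hq0 : q ≠ 0 := by
      intro h0
      have hp0 : p = 0 := by
        rw [h0, abs_zero, mul_zero] at hpq
        exact abs_eq_zero.mp (le_antisymm hpq (abs_nonneg p))
      have : L v = 0 := by rw [hLv, h0, hp0, mul_zero, mul_zero, zero_smul, zero_smul, add_zero]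
      rw [← hL, this, norm_zero] at hg
      norm_num at hg
    have hqq : (0:ℝ) < |q| := abs_pos.2 hq0
    -- lower bound on ‖L v‖
    have hlow : |b| * |q| - |a| * |p| ≤ ‖L v‖ := by
      have h1 : ‖(b * q) • Fs (f^[n] x)‖ ≤ ‖L v‖ + ‖(a * p) • Es (f^[n] x)‖ := by
        calc ‖(b * q) • Fs (f^[n] x)‖
            = ‖L v - (a * p) • Es (f^[n] x)‖ := by rw [hLv, add_sub_cancel_left]
          _ ≤ ‖L v‖ + ‖(a * p) • Es (f^[n] x)‖ := norm_sub_le _ _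
      rw [norm_smul, norm_smul, hEunit _ (hxn n), hFunit _ (hxn n), Real.norm_eq_abs,
        Real.norm_eq_abs, mul_one, mul_one, abs_mul, abs_mul] at h1
      linarith
    have hap : |a| * |p| ≤ |b| * |q| / 2 := by
      have h2 : |a| * |p| ≤ |a| * (lam ^ n * |q|) :=
        mul_le_mul_of_nonneg_left hpq (abs_nonneg a)
      have h3 : |a| * lam ^ n ≤ |b| / 2 := by
        have h4 : |a| * (|b| / (2 * (|a| + 1))) ≤ |b| / 2 := by
          rw [← mul_div_assoc, div_le_div_iff₀ (by positivity) (by norm_num)]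
          nlinarith [abs_nonneg a, abs_nonneg b]
        calc |a| * lam ^ n ≤ |a| * (|b| / (2 * (|a| + 1))) :=
              mul_le_mul_of_nonneg_left (le_of_lt hn1) (abs_nonneg a)
          _ ≤ |b| / 2 := h4
      nlinarith [abs_nonneg q]
    have hlow2 : |b| * |q| / 2 ≤ ‖L v‖ := by linarith
    have hLvpos : (0:ℝ) < ‖L v‖ := lt_of_lt_of_le (by positivity) hlow2
    -- determinant bound
    have hdet : |LinearMap.det (L.toLinearMap)| * |δ| ≤ |p| * |q| := by
      have h1 := om_det L.toLinearMap (Es x) (Fs x)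
      have h2 : om (L (Es x)) (L (Fs x)) = LinearMap.det (L.toLinearMap) * δ := h1
      rw [hp, hq, om_smul_smul] at h2
      have h3 : |LinearMap.det (L.toLinearMap)| * |δ|
          = |p| * |q| * |om (Es (f^[n] x)) (Fs (f^[n] x))| := by
        rw [← abs_mul, ← h2, abs_mul, abs_mul]
      rw [h3]
      have h4 : |om (Es (f^[n] x)) (Fs (f^[n] x))| ≤ 1 := by
        have := om_abs_le (Es (f^[n] x)) (Fs (f^[n] x))
        rwa [hEunit _ (hxn n), hFunit _ (hxn n), one_mul] at this
      nlinarith [mul_nonneg (abs_nonneg p) (abs_nonneg q), abs_nonneg (om (Es (f^[n] x)) (Fs (f^[n] x)))]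
    have hD : ‖L v‖ ^ 2 ≤ |LinearMap.det (L.toLinearMap)| := by
      have h5 : (0:ℝ) < ‖L v‖ ^ 2 := by positivity
      have := (le_div_iff₀ h5).mp hg
      linarith
    have hD2 : (|b| * |q| / 2) ^ 2 ≤ |LinearMap.det (L.toLinearMap)| := by
      calc (|b| * |q| / 2) ^ 2 ≤ ‖L v‖ ^ 2 := by
            apply pow_le_pow_left₀ (by positivity) hlow2
        _ ≤ _ := hD
    -- final contradiction
    have hfin : |δ| * (|b| * |q| / 2) ^ 2 ≤ lam ^ n * |q| ^ 2 := by
      calc |δ| * (|b| * |q| / 2) ^ 2 ≤ |δ| * |LinearMap.det (L.toLinearMap)| :=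
            mul_le_mul_of_nonneg_left hD2 (le_of_lt hδpos)
        _ ≤ |p| * |q| := by linarith [hdet]
        _ ≤ (lam ^ n * |q|) * |q| := mul_le_mul_of_nonneg_right hpq (abs_nonneg q)
        _ = lam ^ n * |q| ^ 2 := by ring
    have : |δ| * b ^ 2 / 4 ≤ lam ^ n := by
      have hq2 : (0:ℝ) < |q| ^ 2 := by positivity
      have h6 : |δ| * (|b| * |q| / 2) ^ 2 = (|δ| * b ^ 2 / 4) * |q| ^ 2 := by
        rw [← sq_abs b]; ring
      rw [h6] at hfin
      exact le_of_mul_le_mul_right hfin hq2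
    linarith
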